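/- For all positive integers n and t, the complete multipartite graph K_{n×t} with n parts each of size t is integrable with respect to norm t: there exists a matrix N with integer entries, with nt columns indexed by the vertices, such that NᵀN = A(K_{n×t}) + t·I. -/

import Mathlib

open Matrix

section AuxStmt8

open Finset

private lemma stmt8_cnt1 (t : ℕ) (a : Fin t) :
    ∑ b : Fin t, (if a < b then (1:ℤ) else 0) = (t : ℤ) - 1 - a := by
  rw [Finset.sum_boole, Finset.filter_lt_eq_Ioi, Fin.card_Ioi]
  have := a.2; omega

private lemma stmt8_cnt2 (t : ℕ) (b : Fin t) :
    ∑ a : Fin t, (if a < b then (1:ℤ) else 0) = (b : ℤ) := by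
  rw [Finset.sum_boole, Finset.filter_gt_eq_Iio, Fin.card_Iio]

/-- Column `j` of the oriented incidence matrix of the complete graph on `Fin t`,
indexed by ordered pairs `p` with `p.1 < p.2`. -/
private def stmt8w (t : ℕ) (j : Fin t) (p : Fin t × Fin t) : ℤ :=
  if p.1 < p.2 then (if j = p.1 then 1 else if j = p.2 then -1 else 0) else 0

private lemma stmt8w_gram (t : ℕ) (j j' : Fin t) :
    ∑ p : Fin t × Fin t, stmt8w t j p * stmt8w t j' p
      = if j = j' then (t : ℤ) - 1 else -1 := by
  have key : ∀ a b : Fin t, stmt8w t j (a, b) * stmt8w t j' (a, b) =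
      ((if j = a then (if j' = a then (if a < b then (1:ℤ) else 0) else 0) else 0)
       - (if j = a then (if j' = b then (if a < b then (1:ℤ) else 0) else 0) else 0)
       - (if j = b then (if j' = a then (if a < b then (1:ℤ) else 0) else 0) else 0))
       + (if j = b then (if j' = b then (if a < b then (1:ℤ) else 0) else 0) else 0) := by
    intro a b
    simp only [stmt8w]
    split_ifs <;> simp_all
  rw [Fintype.sum_prod_type]
  simp only [key, Finset.sum_add_distrib, Finset.sum_sub_distrib]
  have A1 : ∑ a : Fin t, ∑ b : Fin t,
      (if j = a then (if j' = a then (if a < b then (1:ℤ) else 0) else 0) else 0)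
      = if j = j' then (t:ℤ) - 1 - j else 0 := by
    have h : ∀ a : Fin t, ∑ b : Fin t,
        (if j = a then (if j' = a then (if a < b then (1:ℤ) else 0) else 0) else 0)
        = if j = a then (if j' = a then (t:ℤ) - 1 - a else 0) else 0 := by
      intro a; split_ifs with h1 h2
      · exact stmt8_cnt1 t a
      · simp
      · simp
    simp only [h]
    rw [Finset.sum_ite_eq]
    simp only [Finset.mem_univ, if_true]
    rcases eq_or_ne j j' with rfl | hne
    · simp
    · simp [hne, Ne.symm hne]
  have A2 : ∑ a : Fin t, ∑ b : Fin t,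
      (if j = a then (if j' = b then (if a < b then (1:ℤ) else 0) else 0) else 0)
      = if j < j' then (1:ℤ) else 0 := by
    have h : ∀ a : Fin t, ∑ b : Fin t,
        (if j = a then (if j' = b then (if a < b then (1:ℤ) else 0) else 0) else 0)
        = if j = a then (if a < j' then (1:ℤ) else 0) else 0 := by
      intro a
      rcases eq_or_ne j a with rfl | h1
      · simp only [eq_self_iff_true, if_true]
        rw [Finset.sum_ite_eq]
        simp only [Finset.mem_univ, if_true]
      · simp [Ne.symm h1, h1]
    simp only [h]
    rw [Finset.sum_ite_eq]
    simp only [Finset.mem_univ, if_true]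
  have A3 : ∑ a : Fin t, ∑ b : Fin t,
      (if j = b then (if j' = a then (if a < b then (1:ℤ) else 0) else 0) else 0)
      = if j' < j then (1:ℤ) else 0 := by
    have h : ∀ a : Fin t, ∑ b : Fin t,
        (if j = b then (if j' = a then (if a < b then (1:ℤ) else 0) else 0) else 0)
        = if j' = a then (if a < j then (1:ℤ) else 0) else 0 := by
      intro a
      rcases eq_or_ne j' a with rfl | h1
      · simp only [eq_self_iff_true, if_true]
        rw [Finset.sum_ite_eq]
        simp only [Finset.mem_univ, if_true]
      · simp [h1]
    simp only [h]
    rw [Finset.sum_ite_eq]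
    simp only [Finset.mem_univ, if_true]
  have A4 : ∑ a : Fin t, ∑ b : Fin t,
      (if j = b then (if j' = b then (if a < b then (1:ℤ) else 0) else 0) else 0)
      = if j = j' then (j : ℤ) else 0 := by
    rw [Finset.sum_comm]
    have h : ∀ b : Fin t, ∑ a : Fin t,
        (if j = b then (if j' = b then (if a < b then (1:ℤ) else 0) else 0) else 0)
        = if j = b then (if j' = b then (b:ℤ) else 0) else 0 := by
      intro b; split_ifs with h1 h2
      · exact stmt8_cnt2 t b
      · simp
      · simp
    simp only [h]
    rw [Finset.sum_ite_eq]
    simp only [Finset.mem_univ, if_true]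
    rcases eq_or_ne j j' with rfl | hne
    · simp
    · simp [hne, Ne.symm hne]
  rw [A1, A2, A3, A4]
  rcases eq_or_ne j j' with rfl | h
  · simp
  · rcases lt_or_gt_of_ne h with h1 | h1 <;> simp [h, h1, asymm h1]

end AuxStmt8

open scoped Classical in
/-- The complete multipartite graph `K_{n×t}` with `n` parts of size `t` is integrable
with respect to norm `t`. -/
theorem stmt_8 (n t : ℕ) (hn : 0 < n) (ht : 0 < t) :
    ∃ (ρ : ℕ) (N : Matrix (Fin ρ) ((_ : Fin n) × Fin t) ℤ),
      Nᵀ * N =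
        (SimpleGraph.completeMultipartiteGraph (fun _ : Fin n => Fin t)).adjMatrix ℤ
          + (t : ℤ) • 1 := by
  classical
  set I := Unit ⊕ (Fin n × (Fin t × Fin t)) with hI
  set M : Matrix I ((_ : Fin n) × Fin t) ℤ :=
    Sum.elim (fun _ _ => 1) (fun kp v => if kp.1 = v.1 then stmt8w t v.2 kp.2 else 0) with hM
  refine ⟨Fintype.card I, M.submatrix (Fintype.equivFin I).symm id, ?_⟩
  have hre : (M.submatrix (Fintype.equivFin I).symm id)ᵀ
        * (M.submatrix (Fintype.equivFin I).symm id) = Mᵀ * M := by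
    rw [transpose_submatrix, submatrix_mul_equiv, submatrix_id_id]
  rw [hre]
  ext v v'
  obtain ⟨i, j⟩ := v
  obtain ⟨i', j'⟩ := v'
  rw [Matrix.mul_apply]
  rw [Fintype.sum_sum_type]
  simp only [transpose_apply]
  simp only [hM, transpose_apply, Sum.elim_inl, Sum.elim_inr, one_mul]
  have hsum : ∑ x : Fin n × (Fin t × Fin t),
      (if x.1 = i then stmt8w t j x.2 else 0) * (if x.1 = i' then stmt8w t j' x.2 else 0)
      = if i = i' then ∑ p : Fin t × Fin t, stmt8w t j p * stmt8w t j' p else 0 := by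
    rw [Fintype.sum_prod_type]
    have h : ∀ k : Fin n, ∑ p : Fin t × Fin t,
        (if k = i then stmt8w t j p else 0) * (if k = i' then stmt8w t j' p else 0)
        = if k = i then (if k = i' then ∑ p : Fin t × Fin t, stmt8w t j p * stmt8w t j' p
            else 0) else 0 := by
      intro k; split_ifs <;> simp
    simp only [h]
    rw [Finset.sum_ite_eq']
    simp only [Finset.mem_univ, if_true]
  rw [hsum, stmt8w_gram]
  simp only [Matrix.add_apply, SimpleGraph.adjMatrix_apply, Matrix.smul_apply,
    Matrix.one_apply, smul_eq_mul, SimpleGraph.comap_adj, SimpleGraph.top_adj,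
    Finset.sum_const, Finset.card_univ, Fintype.card_unit, one_smul]
  rcases eq_or_ne i i' with rfl | hii
  · rcases eq_or_ne j j' with rfl | hjj
    · simp
    · have : (Sigma.mk i j : (_ : Fin n) × Fin t) ≠ ⟨i, j'⟩ := by
        simp [Sigma.mk.inj_iff, hjj]
      simp [hjj, this]
  · have : (Sigma.mk i j : (_ : Fin n) × Fin t) ≠ ⟨i', j'⟩ := by
      simp [Sigma.mk.inj_iff, hii]
    simp [hii, this]
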